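/- arXiv:2106.09675 — 3 statements merged into one kernel-verified Lean document; each statement's English description precedes it below -/
import Mathlib

section
/- Greedy optimality for the trace objective (Proposition, Appendix A): For every dimension d, every weight vector p : Fin d → ℝ with pᵢ ≥ 0 for all i, every regularizer λ > 0, and every batch size B ∈ ℕ, any greedy sequence n⁽⁰⁾, n⁽¹⁾, …, n⁽ᴮ⁾ satisfies Val(n⁽ᴮ⁾) = min { Val(n) : n : Fin d → ℕ, Σᵢ nᵢ ≤ B }. -/
/-- `Val n = ∑ i, p i / (n i + λ)`, the trace objective in the orthonormal case. -/
noncomputable def traceVal (d : ℕ) (p : Fin d → ℝ) (lam : ℝ) (n : Fin d → ℕ) : ℝ :=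
  ∑ i, p i / ((n i : ℝ) + lam)

/-- Monotonicity of the marginal change in the count. -/
lemma greedy_delta_mono (p lam : ℝ) (hp : 0 ≤ p) (hlam : 0 < lam) {a b : ℝ}
    (ha : 0 ≤ a) (hab : a ≤ b) :
    p / (a + 1 + lam) - p / (a + lam) ≤ p / (b + 1 + lam) - p / (b + lam) := by
  have h1 : 0 < a + lam := by linarith
  have h2 : 0 < a + 1 + lam := by linarith
  have h3 : 0 < b + lam := by linarith
  have h4 : 0 < b + 1 + lam := by linarith
  have e1 : p / (a + 1 + lam) - p / (a + lam) = -(p / ((a + lam) * (a + 1 + lam))) := by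
    field_simp; ring
  have e2 : p / (b + 1 + lam) - p / (b + lam) = -(p / ((b + lam) * (b + 1 + lam))) := by
    field_simp; ring
  rw [e1, e2, neg_le_neg_iff]
  have hba : (a + lam) * (a + 1 + lam) ≤ (b + lam) * (b + 1 + lam) := by nlinarith
  exact div_le_div_of_nonneg_left hp (by positivity) hba |>.trans_eq rfl
    |>.trans_eq rfl |>.trans (le_refl _) |>.trans (le_refl _) |>.trans (le_refl _)

/-- Value after incrementing one coordinate. -/
lemma traceVal_update (d : ℕ) (p : Fin d → ℝ) (lam : ℝ) (n : Fin d → ℕ) (j : Fin d) :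
    traceVal d p lam (Function.update n j (n j + 1))
      = traceVal d p lam n
        + (p j / ((n j : ℝ) + 1 + lam) - p j / ((n j : ℝ) + lam)) := by
  classical
  unfold traceVal
  rw [← Finset.sum_erase_add _ _ (Finset.mem_univ j),
      ← Finset.sum_erase_add _ _ (Finset.mem_univ j)]
  have h : ∑ i ∈ Finset.univ.erase j,
        p i / ((Function.update n j (n j + 1) i : ℝ) + lam)
      = ∑ i ∈ Finset.univ.erase j, p i / ((n i : ℝ) + lam) := by
    refine Finset.sum_congr rfl fun i hi => ?_
    rw [Function.update_of_ne (Finset.ne_of_mem_erase hi)]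
  rw [h, Function.update_self]
  push_cast
  ring

/-- Sum after incrementing one coordinate. -/
lemma sum_update_succ (d : ℕ) (n : Fin d → ℕ) (j : Fin d) :
    (∑ i, Function.update n j (n j + 1) i) = (∑ i, n i) + 1 := by
  classical
  rw [Finset.sum_update_of_mem (Finset.mem_univ j),
      ← Finset.sum_erase_add _ _ (Finset.mem_univ j), Finset.sdiff_singleton_eq_erase]
  omega

/-- Greedy optimality for the trace objective: any greedy sequence
`n⁽⁰⁾, …, n⁽ᴮ⁾` (starting at `0` and at each step adding one unit to a coordinate
minimizing the marginal change `pᵢ/(nᵢ+1+λ) − pᵢ/(nᵢ+λ)`) achieves the minimum of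
`Val` over all `n : Fin d → ℕ` with `∑ᵢ nᵢ ≤ B`. -/
theorem greedy_trace_optimal
    (d : ℕ) (p : Fin d → ℝ) (hp : ∀ i, 0 ≤ p i) (lam : ℝ) (hlam : 0 < lam)
    (B : ℕ) (gseq : ℕ → (Fin d → ℕ))
    (h0 : gseq 0 = 0)
    (hstep : ∀ t < B, ∃ i : Fin d,
      (∀ j : Fin d,
        p i / ((gseq t i : ℝ) + 1 + lam) - p i / ((gseq t i : ℝ) + lam)
          ≤ p j / ((gseq t j : ℝ) + 1 + lam) - p j / ((gseq t j : ℝ) + lam)) ∧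
      gseq (t + 1) = Function.update (gseq t) i (gseq t i + 1)) :
    IsLeast {v : ℝ | ∃ n : Fin d → ℕ, (∑ i, n i) ≤ B ∧ v = traceVal d p lam n}
      (traceVal d p lam (gseq B)) := by
  classical
  -- Main induction: at time `t ≤ B`, the greedy point has total `t` and is
  -- optimal among all points of total exactly `t`.
  have key : ∀ t, t ≤ B → (∑ i, gseq t i) = t ∧
      ∀ m : Fin d → ℕ, (∑ i, m i) = t →
        traceVal d p lam (gseq t) ≤ traceVal d p lam m := by
    intro t
    induction t with
    | zero =>
      intro _
      constructor
      · simp [h0]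
      · intro m hm
        have : ∀ i, m i = 0 := by
          intro i
          have := Finset.sum_eq_zero_iff.mp hm i (Finset.mem_univ i)
          exact this
        have hmg : m = gseq 0 := by
          funext i; simp [h0, this i]
        rw [hmg]
    | succ t ih =>
      intro hB
      obtain ⟨hsum, hopt⟩ := ih (Nat.le_of_succ_le hB)
      obtain ⟨i, hi, hupd⟩ := hstep t (by omega)
      have hsum' : (∑ k, gseq (t + 1) k) = t + 1 := by
        rw [hupd, sum_update_succ, hsum]
      refine ⟨hsum', ?_⟩
      intro m hm
      -- find a coordinate where m exceeds the greedy point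
      have hex : ∃ j, gseq t j < m j := by
        by_contra hcon
        push_neg at hcon
        have : (∑ k, m k) ≤ ∑ k, gseq t k := Finset.sum_le_sum fun k _ => hcon k
        omega
      obtain ⟨j, hj⟩ := hex
      have hmj : 1 ≤ m j := by omega
      set m' : Fin d → ℕ := Function.update m j (m j - 1) with hm'def
      have hm'j : m' j = m j - 1 := by simp [hm'def]
      have hmm' : Function.update m' j (m' j + 1) = m := by
        funext k
        by_cases hk : k = j
        · subst hk; simp [hm'def]; omega
        · simp [hm'def, Function.update_of_ne hk]
      have hsumm' : (∑ k, m' k) = t := by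
        have h1 : (∑ k, m' k) = (m j - 1) + ∑ k ∈ Finset.univ.erase j, m k := by
          rw [hm'def, Finset.sum_update_of_mem (Finset.mem_univ j),
            Finset.sdiff_singleton_eq_erase]
        have h2 : (∑ k ∈ Finset.univ.erase j, m k) + m j = ∑ k, m k :=
          Finset.sum_erase_add _ _ (Finset.mem_univ j)
        omega
      -- value decompositions
      have vm : traceVal d p lam m
          = traceVal d p lam m'
            + (p j / ((m' j : ℝ) + 1 + lam) - p j / ((m' j : ℝ) + lam)) := by
        conv_lhs => rw [← hmm']
        exact traceVal_update d p lam m' j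
      have vg : traceVal d p lam (gseq (t + 1))
          = traceVal d p lam (gseq t)
            + (p i / ((gseq t i : ℝ) + 1 + lam) - p i / ((gseq t i : ℝ) + lam)) := by
        rw [hupd]; exact traceVal_update d p lam (gseq t) i
      have hdelta : p i / ((gseq t i : ℝ) + 1 + lam) - p i / ((gseq t i : ℝ) + lam)
          ≤ p j / ((m' j : ℝ) + 1 + lam) - p j / ((m' j : ℝ) + lam) := by
        refine (hi j).trans ?_
        have hle : (gseq t j : ℝ) ≤ (m' j : ℝ) := by
          have : gseq t j ≤ m' j := by omega
          exact_mod_cast this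
        exact greedy_delta_mono (p j) lam (hp j) hlam (Nat.cast_nonneg _) hle
      have := hopt m' hsumm'
      rw [vg, vm]
      linarith
  obtain ⟨hsumB, hoptB⟩ := key B le_rfl
  constructor
  · exact ⟨gseq B, le_of_eq hsumB, rfl⟩
  · rintro v ⟨n, hn, rfl⟩
    rcases Nat.eq_zero_or_pos d with hd | hd
    · subst hd
      simp [traceVal]
    · -- pad `n` up to total `B`
      have j0 : Fin d := ⟨0, hd⟩
      set c : ℕ := B - ∑ k, n k with hc
      set m : Fin d → ℕ := Function.update n j0 (n j0 + c) with hmdef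
      have hsm : (∑ k, m k) = B := by
        have h1 : (∑ k, m k) = (n j0 + c) + ∑ k ∈ Finset.univ.erase j0, n k := by
          rw [hmdef, Finset.sum_update_of_mem (Finset.mem_univ j0),
            Finset.sdiff_singleton_eq_erase]
        have h2 : (∑ k ∈ Finset.univ.erase j0, n k) + n j0 = ∑ k, n k :=
          Finset.sum_erase_add _ _ (Finset.mem_univ j0)
        omega
      have hmn : traceVal d p lam m ≤ traceVal d p lam n := by
        unfold traceVal
        refine Finset.sum_le_sum fun k _ => ?_
        by_cases hk : k = j0
        · subst hk
          rw [hmdef, Function.update_self]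
          have h1 : (0:ℝ) < (n k : ℝ) + lam := by positivity
          have h2 : ((n k : ℝ) + lam) ≤ ((n k + c : ℕ) : ℝ) + lam := by
            push_cast; linarith [Nat.cast_nonneg (α := ℝ) c]
          exact div_le_div_of_nonneg_left (hp k) h1 h2 |>.trans (le_refl _)
        · rw [hmdef, Function.update_of_ne hk]
      exact (hoptB m hsm).trans hmn
end

section
/- Inductive invariant of the greedy algorithm: For every dimension d, every weight vector p : Fin d → ℝ with pᵢ ≥ 0 for all i, every λ > 0, every batch size B ∈ ℕ, any greedy sequence n⁽⁰⁾, …, n⁽ᴮ⁾, and every t ≤ B, the prefix n⁽ᵗ⁾ is optimal for budget t: Val(n⁽ᵗ⁾) = min { Val(n) : n : Fin d → ℕ, Σᵢ nᵢ ≤ t }. -/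
lemma delta_mono_real (p x y : ℝ) (hp : 0 ≤ p) (hx : 0 < x) (hxy : x ≤ y) :
    p / (x + 1) - p / x ≤ p / (y + 1) - p / y := by
  have hy : 0 < y := lt_of_lt_of_le hx hxy
  have e1 : p / (x + 1) - p / x = -(p / (x * (x + 1))) := by
    field_simp; ring
  have e2 : p / (y + 1) - p / y = -(p / (y * (y + 1))) := by
    field_simp; ring
  rw [e1, e2, neg_le_neg_iff]
  gcongr

/-- Inductive invariant of the greedy algorithm: for any greedy sequence
`n⁽⁰⁾, …, n⁽ᴮ⁾` and every `t ≤ B`, the prefix `n⁽ᵗ⁾` is optimal for budget `t`. -/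
theorem greedy_trace_invariant
    (d : ℕ) (p : Fin d → ℝ) (hp : ∀ i, 0 ≤ p i) (lam : ℝ) (hlam : 0 < lam)
    (B : ℕ) (gseq : ℕ → (Fin d → ℕ))
    (h0 : gseq 0 = 0)
    (hstep : ∀ t < B, ∃ i : Fin d,
      (∀ j : Fin d,
        p i / ((gseq t i : ℝ) + 1 + lam) - p i / ((gseq t i : ℝ) + lam)
          ≤ p j / ((gseq t j : ℝ) + 1 + lam) - p j / ((gseq t j : ℝ) + lam)) ∧
      gseq (t + 1) = Function.update (gseq t) i (gseq t i + 1)) :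
    ∀ t ≤ B,
      IsLeast {v : ℝ | ∃ n : Fin d → ℕ, (∑ i, n i) ≤ t ∧ v = traceVal d p lam n}
        (traceVal d p lam (gseq t)) := by
  have hδmono : ∀ j : Fin d, ∀ a b : ℕ, a ≤ b →
      p j / ((a : ℝ) + 1 + lam) - p j / ((a : ℝ) + lam)
        ≤ p j / ((b : ℝ) + 1 + lam) - p j / ((b : ℝ) + lam) := by
    intro j a b hab
    have e1 : (a : ℝ) + 1 + lam = ((a : ℝ) + lam) + 1 := by ring
    have e2 : (b : ℝ) + 1 + lam = ((b : ℝ) + lam) + 1 := by ring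
    rw [e1, e2]
    exact delta_mono_real (p j) _ _ (hp j)
      (by have : (0:ℝ) ≤ (a:ℝ) := Nat.cast_nonneg a; linarith)
      (by have : (a : ℝ) ≤ b := Nat.cast_le.mpr hab; linarith)
  have hδnonpos : ∀ j : Fin d, ∀ a : ℕ,
      p j / ((a : ℝ) + 1 + lam) - p j / ((a : ℝ) + lam) ≤ 0 := by
    intro j a
    have ha : (0:ℝ) ≤ (a:ℝ) := Nat.cast_nonneg a
    have h1 : p j / ((a : ℝ) + 1 + lam) ≤ p j / ((a : ℝ) + lam) := by
      gcongr <;> linarith [hp j]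
    linarith
  have hsum : ∀ t, t ≤ B → (∑ i, gseq t i) = t := by
    intro t
    induction t with
    | zero => intro _; simp [h0]
    | succ s ih =>
      intro hsB
      obtain ⟨i, _, hupd⟩ := hstep s (by omega)
      rw [hupd, Finset.sum_update_of_mem (Finset.mem_univ i)]
      rw [show (∑ k, gseq s k)
          = gseq s i + ∑ k ∈ Finset.univ \ {i}, gseq s k
          from (Finset.sum_eq_add_sum_sdiff_singleton_of_mem (Finset.mem_univ i) _)] at ih
      have := ih (by omega)
      omega
  intro t
  induction t with
  | zero =>
    intro _
    constructor
    · exact ⟨gseq 0, by simp [h0], rfl⟩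
    · rintro v ⟨m, hm, rfl⟩
      have hm0 : m = 0 := by
        funext i
        have hi : m i ≤ ∑ k, m k :=
          Finset.single_le_sum (fun k _ => Nat.zero_le (m k)) (Finset.mem_univ i)
        simp only [Pi.zero_apply]
        omega
      rw [h0, hm0]
  | succ s ih =>
    intro hsB
    have hs' : s ≤ B := by omega
    obtain ⟨i, hgreedy, hupd⟩ := hstep s (by omega)
    obtain ⟨hmem_s, hlb_s⟩ := ih hs'
    constructor
    · exact ⟨gseq (s + 1), le_of_eq (hsum (s + 1) hsB), rfl⟩
    · rintro v ⟨m, hm, rfl⟩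
      by_cases hc : (∑ k, m k) ≤ s
      · have h1 : traceVal d p lam (gseq s) ≤ traceVal d p lam m := hlb_s ⟨m, hc, rfl⟩
        have h2 := hδnonpos i (gseq s i)
        rw [hupd, traceVal_update]
        linarith
      · have hmsum : (∑ k, m k) = s + 1 := by omega
        have hg : (∑ k, gseq s k) = s := hsum s hs'
        have hex : ∃ j, gseq s j < m j := by
          by_contra hcon
          push_neg at hcon
          have : (∑ k, m k) ≤ ∑ k, gseq s k :=
            Finset.sum_le_sum (fun k _ => hcon k)
          omega
        obtain ⟨j, hj⟩ := hex
        set m' := Function.update m j (m j - 1) with hm'def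
        have hmj : 1 ≤ m j := by omega
        have hm'j : m' j = m j - 1 := by simp [hm'def]
        have hmm : m = Function.update m' j (m' j + 1) := by
          funext k
          by_cases hk : k = j
          · subst hk; simp [hm'def]; omega
          · simp [hm'def, Function.update, hk]
        have hm'sum : (∑ k, m' k) ≤ s := by
          rw [hm'def, Finset.sum_update_of_mem (Finset.mem_univ j)]
          rw [show (∑ k, m k)
              = m j + ∑ k ∈ Finset.univ \ {j}, m k
              from (Finset.sum_eq_add_sum_sdiff_singleton_of_mem (Finset.mem_univ j) _)] at hmsum
          omega
        have hval : traceVal d p lam m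
            = traceVal d p lam m'
              + (p j / ((m' j : ℝ) + 1 + lam) - p j / ((m' j : ℝ) + lam)) := by
          conv_lhs => rw [hmm]
          exact traceVal_update d p lam m' j
        have h1 : traceVal d p lam (gseq s) ≤ traceVal d p lam m' := hlb_s ⟨m', hm'sum, rfl⟩
        have h2 := hgreedy j
        have h3 := hδmono j (gseq s j) (m' j) (by omega)
        rw [hupd, traceVal_update]
        linarith
end

section
/- Greedy optimality for the log-determinant objective in the orthonormal case (footnote claim): For every d ∈ ℕ, every λ > 0, and every B ∈ ℕ, any sequence n⁽⁰⁾, …, n⁽ᴮ⁾ in ℕ^d with n⁽⁰⁾ = 0 and n⁽ᵗ⁺¹⁾ = n⁽ᵗ⁾ + e_{i_{t+1}}, where i_{t+1} is any index maximizing log(n⁽ᵗ⁾ᵢ + 1 + λ) − log(n⁽ᵗ⁾ᵢ + λ) over i ∈ Fin d, satisfies Σᵢ log(n⁽ᴮ⁾ᵢ + λ) = max { Σᵢ log(nᵢ + λ) : n : Fin d → ℕ, Σᵢ nᵢ ≤ B }. -/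
private lemma gain_anti (lam : ℝ) (hlam : 0 < lam) {a b : ℝ} (h0 : 0 ≤ a) (hab : a ≤ b) :
    Real.log (b + 1 + lam) - Real.log (b + lam)
      ≤ Real.log (a + 1 + lam) - Real.log (a + lam) := by
  have ha : (0:ℝ) < a + lam := by linarith
  have hb : (0:ℝ) < b + lam := by linarith
  have ha1 : (0:ℝ) < a + 1 + lam := by linarith
  have hb1 : (0:ℝ) < b + 1 + lam := by linarith
  rw [sub_le_sub_iff, ← Real.log_mul hb1.ne' ha.ne', ← Real.log_mul ha1.ne' hb.ne']
  apply Real.log_le_log (mul_pos hb1 ha)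
  nlinarith

private lemma sum_update_log (d : ℕ) (lam : ℝ) (g : Fin d → ℕ) (i : Fin d) (v : ℕ) :
    ∑ j, Real.log ((Function.update g i v j : ℝ) + lam)
      = ∑ j, Real.log ((g j : ℝ) + lam) - Real.log ((g i : ℝ) + lam)
        + Real.log ((v : ℝ) + lam) := by
  have hpt : ∀ j, Real.log ((Function.update g i v j : ℝ) + lam)
      = Function.update (fun k => Real.log ((g k : ℝ) + lam)) i (Real.log ((v : ℝ) + lam)) j :=
    fun j => Function.apply_update (fun (_ : Fin d) (x : ℕ) => Real.log ((x : ℝ) + lam)) g i v j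
  rw [Finset.sum_congr rfl fun j _ => hpt j,
    Finset.sum_update_of_mem (Finset.mem_univ i),
    Finset.sum_eq_sum_sdiff_singleton_add (Finset.mem_univ i)
      (fun j => Real.log ((g j : ℝ) + lam))]
  ring

/-- Greedy optimality for the log-determinant objective in the orthonormal case:
any greedy sequence (starting at `0` and at each step adding one unit to a coordinate
maximizing the marginal gain `log(nᵢ+1+λ) − log(nᵢ+λ)`) achieves the maximum of
`∑ᵢ log(nᵢ + λ)` over all `n : Fin d → ℕ` with `∑ᵢ nᵢ ≤ B`. -/
theorem greedy_logdet_optimal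
    (d : ℕ) (lam : ℝ) (hlam : 0 < lam) (B : ℕ)
    (gseq : ℕ → (Fin d → ℕ)) (h0 : gseq 0 = 0)
    (hstep : ∀ t < B, ∃ i : Fin d,
      (∀ j : Fin d,
        Real.log ((gseq t j : ℝ) + 1 + lam) - Real.log ((gseq t j : ℝ) + lam)
          ≤ Real.log ((gseq t i : ℝ) + 1 + lam) - Real.log ((gseq t i : ℝ) + lam)) ∧
      gseq (t + 1) = Function.update (gseq t) i (gseq t i + 1)) :
    IsGreatest {v : ℝ | ∃ n : Fin d → ℕ, (∑ i, n i) ≤ B ∧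
        v = ∑ i, Real.log ((n i : ℝ) + lam)}
      (∑ i, Real.log ((gseq B i : ℝ) + lam)) := by
  set f : (Fin d → ℕ) → ℝ := fun n => ∑ i, Real.log ((n i : ℝ) + lam) with hf
  have hsum : ∀ t ≤ B, (∑ i, gseq t i) = t := by
    intro t ht
    induction t with
    | zero => simp [h0]
    | succ t ih =>
      obtain ⟨i, -, hupd⟩ := hstep t (by omega)
      rw [hupd, Finset.sum_update_of_mem (Finset.mem_univ i)]
      have h2 := Finset.sum_eq_sum_sdiff_singleton_add (Finset.mem_univ i) (gseq t)
      have h3 := ih (by omega)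
      omega
  have hmain : ∀ t ≤ B, ∀ n : Fin d → ℕ, (∑ i, n i) ≤ t → f n ≤ f (gseq t) := by
    intro t ht
    induction t with
    | zero =>
      intro n hn
      have hz : ∀ i, n i = 0 := by
        intro i
        have := Finset.single_le_sum (f := n) (fun i _ => Nat.zero_le _) (Finset.mem_univ i)
        omega
      have : f n = f (gseq 0) := by
        rw [h0, hf]
        exact Finset.sum_congr rfl fun i _ => by rw [hz i]; rfl
      exact le_of_eq this
    | succ t ih =>
      intro n hn
      obtain ⟨i, hmax, hupd⟩ := hstep t (by omega)
      have hft1 : f (gseq (t+1)) = f (gseq t) - Real.log ((gseq t i : ℝ) + lam)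
          + Real.log ((gseq t i : ℝ) + 1 + lam) := by
        rw [hupd]
        have := sum_update_log d lam (gseq t) i (gseq t i + 1)
        push_cast at this
        rw [hf]; linarith
      rcases Nat.lt_or_ge (∑ i, n i) (t+1) with hlt | hge
      · have h1 := ih (by omega) n (by omega)
        have hgain : Real.log ((gseq t i : ℝ) + lam) ≤ Real.log ((gseq t i : ℝ) + 1 + lam) :=
          Real.log_le_log (by positivity) (by linarith)
        linarith
      · have hsnt : (∑ i, n i) = t + 1 := le_antisymm hn hge
        have hex : ∃ j, gseq t j < n j := by
          by_contra hc
          push_neg at hc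
          have h4 : (∑ i, n i) ≤ ∑ i, gseq t i := Finset.sum_le_sum fun i _ => hc i
          rw [hsum t (by omega)] at h4
          omega
        obtain ⟨j, hj⟩ := hex
        set n' := Function.update n j (n j - 1) with hn'
        have hnj : 1 ≤ n j := by omega
        have hcast : ((n j - 1 : ℕ) : ℝ) + 1 = (n j : ℝ) := by
          have : (n j - 1) + 1 = n j := by omega
          exact_mod_cast congrArg (Nat.cast : ℕ → ℝ) this
        have hfn : f n = f n' + (Real.log ((n j : ℝ) + lam)
            - Real.log (((n j - 1 : ℕ) : ℝ) + lam)) := by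
          have hsu := sum_update_log d lam n j (n j - 1)
          rw [hn']
          show (∑ i, Real.log ((n i : ℝ) + lam))
            = (∑ i, Real.log ((Function.update n j (n j - 1) i : ℝ) + lam))
              + (Real.log ((n j : ℝ) + lam) - Real.log (((n j - 1 : ℕ) : ℝ) + lam))
          linarith
        have hsumn' : ∑ i, n' i ≤ t := by
          rw [hn', Finset.sum_update_of_mem (Finset.mem_univ j)]
          have h5 := Finset.sum_eq_sum_sdiff_singleton_add (Finset.mem_univ j) n
          omega
        have h1 : f n' ≤ f (gseq t) := ih (by omega) n' hsumn'
        have h2 : Real.log ((n j : ℝ) + lam) - Real.log (((n j - 1 : ℕ) : ℝ) + lam)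
            ≤ Real.log ((gseq t j : ℝ) + 1 + lam) - Real.log ((gseq t j : ℝ) + lam) := by
          have key := gain_anti lam hlam (a := (gseq t j : ℝ)) (b := ((n j - 1 : ℕ) : ℝ))
            (by positivity) (by
              have : gseq t j ≤ n j - 1 := by omega
              exact_mod_cast this)
          have hb1 : ((n j - 1 : ℕ) : ℝ) + 1 + lam = (n j : ℝ) + lam := by linarith
          rw [hb1] at key
          exact key
        have h3 := hmax j
        linarith
  constructor
  · exact ⟨gseq B, le_of_eq (hsum B le_rfl), rfl⟩
  · rintro v ⟨n, hn, rfl⟩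
    exact hmain B le_rfl n hn
end
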